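/- Let g : ℝ → ℝ be continuous and periodic with period T > 0, and let f : ℝ → ℝ be a continuous integrable probability density. Then ∫ f(x) g(λ x) dx → (1/T) ∫₀ᵀ g(t) dt as λ → ∞. -/

import Mathlib

open MeasureTheory Filter
open scoped FourierTransform Real

lemma rl_aux (f : ℝ → ℝ) {n : ℤ} (hn : n ≠ 0) {T : ℝ} (hT : 0 < T) :
    Tendsto (fun lam : ℝ => ∫ x : ℝ, (f x : ℂ) *
      Complex.exp (2 * Real.pi * Complex.I * n * (lam * x) / T)) atTop (nhds 0) := by
  have hw : Tendsto (fun lam : ℝ => -((n : ℝ) / T) * lam) atTop (Filter.cocompact ℝ) := by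
    rw [cocompact_eq_atBot_atTop]
    rcases hn.lt_or_gt with h | h
    · refine Tendsto.mono_right ?_ le_sup_right
      have hpos : (0:ℝ) < -((n : ℝ) / T) := by
        have : (n : ℝ) < 0 := by exact_mod_cast h
        have := div_neg_of_neg_of_pos this hT
        linarith
      exact Tendsto.const_mul_atTop hpos tendsto_id
    · refine Tendsto.mono_right ?_ le_sup_left
      have hneg : -((n : ℝ) / T) < 0 := by
        have : (0:ℝ) < (n : ℝ) := by exact_mod_cast h
        have := div_pos this hT
        linarith
      exact Tendsto.const_mul_atTop_of_neg hneg tendsto_id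
  have H := (Real.tendsto_integral_exp_smul_cocompact (fun x : ℝ => (f x : ℂ))).comp hw
  apply H.congr
  intro lam
  simp only [Function.comp]
  congr 1
  funext v
  rw [Circle.smul_def, Real.fourierChar_apply]
  have hTne : (T:ℂ) ≠ 0 := by exact_mod_cast hT.ne'
  have h2 : (↑(2 * Real.pi * -(v * (-((n:ℝ) / T) * lam))) : ℂ) * Complex.I
      = 2 * Real.pi * Complex.I * n * (lam * v) / T := by
    push_cast
    field_simp
  rw [h2]
  exact mul_comm _ _

theorem averaging_arbitrary_functions (g f : ℝ → ℝ) (T : ℝ) (hT : 0 < T)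
    (hg : Continuous g) (hgp : Function.Periodic g T)
    (hf : Continuous f) (hfi : Integrable f) (hf0 : ∀ x, 0 ≤ f x)
    (hf1 : ∫ x, f x = 1) :
    Filter.Tendsto (fun lam : ℝ => ∫ x, f x * g (lam * x)) Filter.atTop
      (nhds ((1 / T) * ∫ t in (0:ℝ)..T, g t)) := by
  haveI : Fact (0 < T) := ⟨hT⟩
  set A : ℝ := (1 / T) * ∫ t in (0:ℝ)..T, g t with hA
  -- the complexified periodic function, lifted to the circle
  have hgpC : Function.Periodic (fun x : ℝ => (g x : ℂ)) T := fun x => by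
    simp [hgp x]
  have hGcont : Continuous hgpC.lift :=
    (Complex.continuous_ofReal.comp hg).quotient_liftOn' _
  set G : C(AddCircle T, ℂ) := ⟨hgpC.lift, hGcont⟩ with hGdef
  have hGcoe : ∀ x : ℝ, G (x : AddCircle T) = (g x : ℂ) := fun x => rfl
  -- integrability of f against bounded continuous functions
  have hfC : Integrable fun x : ℝ => (f x : ℂ) := hfi.ofReal
  have key_int : ∀ h : ℝ → ℂ, Continuous h → (∃ C, ∀ x, ‖h x‖ ≤ C) →
      Integrable fun x => (f x : ℂ) * h x := by
    intro h hc hb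
    have := hfC.bdd_mul hc.aestronglyMeasurable (ae_of_all _ hb.choose_spec)
    simpa [mul_comm] using this
  -- reduce to the complex statement
  suffices hC : Tendsto (fun lam : ℝ => ∫ x, (f x : ℂ) * (g (lam * x) : ℂ)) atTop
      (nhds (A : ℂ)) by
    have h1 : ∀ lam : ℝ, (∫ x, f x * g (lam * x)) =
        (∫ x, (f x : ℂ) * (g (lam * x) : ℂ)).re := by
      intro lam
      rw [show (fun x => (f x : ℂ) * (g (lam * x) : ℂ)) =
        fun x => ((f x * g (lam * x) : ℝ) : ℂ) by funext x; push_cast; ring]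
      have hio : (∫ x, ((f x * g (lam * x) : ℝ) : ℂ)) =
          ((∫ x, f x * g (lam * x) : ℝ) : ℂ) := integral_ofReal
      rw [hio, Complex.ofReal_re]
    have h2 := (Complex.continuous_re.tendsto _).comp hC
    simp only [Function.comp, Complex.ofReal_re] at h2
    refine h2.congr fun lam => (h1 lam).symm
  rw [Metric.tendsto_nhds]
  intro ε hε
  -- choose a trigonometric polynomial P with ‖G - P‖ < ε/4
  have hdense : Dense ((Submodule.span ℂ (Set.range (@fourier T)) :
      Submodule ℂ C(AddCircle T, ℂ)) : Set C(AddCircle T, ℂ)) := by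
    rw [Submodule.dense_iff_topologicalClosure_eq_top]
    exact span_fourier_closure_eq_top
  obtain ⟨P, hPmem, hPdist⟩ := Metric.mem_closure_iff.mp (hdense G) (ε / 4) (by positivity)
  obtain ⟨c, hc⟩ := Finsupp.mem_span_range_iff_exists_finsupp.mp hPmem
  set d : ℝ := dist G P with hd
  have hd4 : d < ε / 4 := hPdist
  have hd0 : 0 ≤ d := dist_nonneg
  -- pointwise formula for P on reals
  have hPpt : ∀ y : ℝ, P ((y : ℝ) : AddCircle T) =
      ∑ n ∈ c.support, c n * Complex.exp (2 * Real.pi * Complex.I * n * y / T) := by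
    intro y
    rw [← hc, Finsupp.sum]
    simp only [ContinuousMap.coe_sum, Finset.sum_apply, ContinuousMap.coe_smul, Pi.smul_apply,
      smul_eq_mul, fourier_coe_apply]
  -- the sup-norm bound for G - P
  have hGP : ∀ z : AddCircle T, ‖G z - P z‖ ≤ d := by
    intro z
    calc ‖G z - P z‖ = ‖(G - P) z‖ := by rw [ContinuousMap.sub_apply]
    _ ≤ ‖G - P‖ := ContinuousMap.norm_coe_le_norm _ _
    _ = d := (dist_eq_norm G P).symm
  -- the integral against P tends to c 0
  have hnorm1 : ∀ z : ℂ, (∃ r : ℝ, z = (r : ℂ) * Complex.I) → ‖Complex.exp z‖ = 1 := by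
    rintro z ⟨r, rfl⟩
    rw [Complex.norm_exp_ofReal_mul_I]
  have hPint : Tendsto (fun lam : ℝ => ∫ x, (f x : ℂ) * P ((lam * x : ℝ) : AddCircle T))
      atTop (nhds (c 0)) := by
    have heq : ∀ lam : ℝ, (∫ x, (f x : ℂ) * P ((lam * x : ℝ) : AddCircle T)) =
        ∑ n ∈ c.support, c n * ∫ x, (f x : ℂ) *
          Complex.exp (2 * Real.pi * Complex.I * n * (lam * x) / T) := by
      intro lam
      have hfun : (fun x : ℝ => (f x : ℂ) * P ((lam * x : ℝ) : AddCircle T)) =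
          fun x => ∑ n ∈ c.support, c n *
            ((f x : ℂ) * Complex.exp (2 * Real.pi * Complex.I * n * (lam * x) / T)) := by
        funext x
        rw [hPpt (lam * x), Finset.mul_sum]
        exact Finset.sum_congr rfl fun n _ => by push_cast; ring
      rw [hfun, integral_finset_sum]
      · exact Finset.sum_congr rfl fun n _ => integral_const_mul _ _
      · intro n _
        refine Integrable.const_mul ?_ _
        refine key_int _ ?_ ⟨1, fun x =>
          (hnorm1 _ ⟨2 * Real.pi * n * (lam * x) / T, by push_cast; ring⟩).le⟩
        exact Complex.continuous_exp.comp (by fun_prop)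
    have hval : (∑ n ∈ c.support, c n * (if n = 0 then (1 : ℂ) else 0)) = c 0 := by
      simp only [mul_ite, mul_one, mul_zero]
      rw [Finset.sum_ite_eq' c.support 0 c]
      by_cases h : (0 : ℤ) ∈ c.support
      · simp [h]
      · simp [h, Finsupp.notMem_support_iff.mp h]
    have hlim : Tendsto (fun lam : ℝ => ∑ n ∈ c.support, c n * ∫ x, (f x : ℂ) *
        Complex.exp (2 * Real.pi * Complex.I * n * (lam * x) / T)) atTop
        (nhds (∑ n ∈ c.support, c n * (if n = 0 then (1 : ℂ) else 0))) := by
      refine tendsto_finset_sum _ fun n _ => ?_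
      by_cases h0 : n = 0
      · subst h0
        have hio : (∫ x, ((f x : ℝ) : ℂ)) = ((∫ x, f x : ℝ) : ℂ) := integral_ofReal
        have hone : (fun lam : ℝ => c (0:ℤ) * ∫ x, (f x : ℂ) *
            Complex.exp (2 * Real.pi * Complex.I * ((0:ℤ) : ℂ) * (lam * x) / T)) =
            fun _ => c (0:ℤ) := by
          funext lam
          simp only [Int.cast_zero, mul_zero, zero_mul, zero_div, Complex.exp_zero, mul_one]
          rw [hio, hf1, Complex.ofReal_one, mul_one]
        rw [hone, if_pos rfl, mul_one]
        exact tendsto_const_nhds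
      · have := (rl_aux f h0 hT).const_mul (c n)
        simpa [h0] using this
    rw [hval] at hlim
    exact hlim.congr fun lam => (heq lam).symm
  -- c 0 is close to A
  have hc0 : ‖(A : ℂ) - c 0‖ ≤ d := by
    have hPT : (∫ t in (0:ℝ)..T, P ((t : ℝ) : AddCircle T)) = c 0 * T := by
      calc (∫ t in (0:ℝ)..T, P ((t : ℝ) : AddCircle T))
          = ∫ t in (0:ℝ)..T, ∑ n ∈ c.support, c n *
            Complex.exp (2 * Real.pi * Complex.I * n * t / T) :=
          intervalIntegral.integral_congr fun t _ => hPpt t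
      _ = ∑ n ∈ c.support, ∫ t in (0:ℝ)..T, c n *
            Complex.exp (2 * Real.pi * Complex.I * n * t / T) := by
          refine intervalIntegral.integral_finset_sum fun n _ => ?_
          exact Continuous.intervalIntegrable (by
            exact continuous_const.mul (Complex.continuous_exp.comp (by fun_prop))) _ _
      _ = ∑ n ∈ c.support, c n * (if n = 0 then (T : ℂ) else 0) := by
          refine Finset.sum_congr rfl fun n _ => ?_
          rw [intervalIntegral.integral_const_mul]
          congr 1
          by_cases h0 : n = 0
          · subst h0
            simp
          · rw [if_neg h0]
            have hcoef : (2 * (Real.pi : ℂ) * Complex.I * n / T) ≠ 0 := by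
              have hpi : (Real.pi : ℂ) ≠ 0 := by
                exact_mod_cast Complex.ofReal_ne_zero.mpr Real.pi_ne_zero
              have hTne : (T : ℂ) ≠ 0 := by exact_mod_cast hT.ne'
              have hn : (n : ℂ) ≠ 0 := Int.cast_ne_zero.mpr h0
              exact div_ne_zero (mul_ne_zero (mul_ne_zero (mul_ne_zero two_ne_zero hpi) Complex.I_ne_zero) hn) hTne
            have harg : (fun t : ℝ => Complex.exp (2 * Real.pi * Complex.I * n * t / T)) =
                fun t : ℝ => Complex.exp ((2 * Real.pi * Complex.I * n / T) * t) := by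
              funext t; congr 1; ring
            rw [harg, integral_exp_mul_complex hcoef]
            have hTne : (T : ℂ) ≠ 0 := by exact_mod_cast hT.ne'
            have h1 : (2 * (Real.pi : ℂ) * Complex.I * n / T) * (T : ℂ) =
                n * (2 * Real.pi * Complex.I) := by field_simp
            rw [h1, Complex.exp_int_mul_two_pi_mul_I]
            simp
      _ = c 0 * T := by
          simp only [mul_ite, mul_zero]
          rw [Finset.sum_ite_eq' c.support 0 (fun n => c n * (T : ℂ))]
          by_cases h : (0 : ℤ) ∈ c.support
          · simp [h]
          · simp [h, Finsupp.notMem_support_iff.mp h]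
    have hAT : ((A : ℂ)) * T = ∫ t in (0:ℝ)..T, (g t : ℂ) := by
      rw [intervalIntegral.integral_ofReal, hA]
      have hTne : (T : ℂ) ≠ 0 := by exact_mod_cast hT.ne'
      push_cast
      field_simp
    have hint1 : IntervalIntegrable (fun t : ℝ => (g t : ℂ)) volume 0 T :=
      Continuous.intervalIntegrable (Complex.continuous_ofReal.comp hg) _ _
    have hint2 : IntervalIntegrable (fun t : ℝ => P ((t : ℝ) : AddCircle T)) volume 0 T :=
      Continuous.intervalIntegrable (P.continuous.comp (AddCircle.continuous_mk' T)) _ _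
    have hbound : ‖(A : ℂ) * T - c 0 * T‖ ≤ d * |T - 0| := by
      rw [hAT, ← hPT, ← intervalIntegral.integral_sub hint1 hint2]
      refine intervalIntegral.norm_integral_le_of_norm_le_const fun t ht => ?_
      rw [← hGcoe t]
      exact hGP _
    have hmul : ‖(A : ℂ) - c 0‖ * T ≤ d * T := by
      have : ‖((A : ℂ) - c 0) * T‖ = ‖(A : ℂ) - c 0‖ * T := by
        rw [norm_mul, Complex.norm_real, Real.norm_eq_abs, abs_of_pos hT]
      calc ‖(A : ℂ) - c 0‖ * T = ‖(A : ℂ) * T - c 0 * T‖ := by rw [← this, sub_mul]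
      _ ≤ d * |T - 0| := hbound
      _ = d * T := by rw [sub_zero, abs_of_pos hT]
    exact le_of_mul_le_mul_right hmul hT
  -- the integral against G is close to the integral against P
  have hclose : ∀ lam : ℝ, ‖(∫ x, (f x : ℂ) * (g (lam * x) : ℂ)) -
      ∫ x, (f x : ℂ) * P ((lam * x : ℝ) : AddCircle T)‖ ≤ d := by
    intro lam
    have hint1 : Integrable fun x : ℝ => (f x : ℂ) * (g (lam * x) : ℂ) := by
      refine key_int _ (Complex.continuous_ofReal.comp (hg.comp (by fun_prop))) ⟨‖G‖, fun x => ?_⟩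
      rw [← hGcoe]
      exact G.norm_coe_le_norm _
    have hint2 : Integrable fun x : ℝ => (f x : ℂ) * P ((lam * x : ℝ) : AddCircle T) := by
      refine key_int _ (P.continuous.comp ((AddCircle.continuous_mk' T).comp (by fun_prop)))
        ⟨‖P‖, fun x => P.norm_coe_le_norm _⟩
    rw [← integral_sub hint1 hint2]
    have hpt : ∀ x : ℝ, ‖(f x : ℂ) * (g (lam * x) : ℂ) -
        (f x : ℂ) * P ((lam * x : ℝ) : AddCircle T)‖ ≤ f x * d := by
      intro x
      rw [← mul_sub, norm_mul, Complex.norm_real, Real.norm_eq_abs, abs_of_nonneg (hf0 x)]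
      refine mul_le_mul_of_nonneg_left ?_ (hf0 x)
      rw [← hGcoe]
      exact hGP _
    calc ‖∫ x, ((f x : ℂ) * (g (lam * x) : ℂ) - (f x : ℂ) * P ((lam * x : ℝ) : AddCircle T))‖
        ≤ ∫ x, f x * d := norm_integral_le_of_norm_le (hfi.mul_const d) (ae_of_all _ hpt)
    _ = d := by rw [integral_mul_const, hf1, one_mul]
  filter_upwards [Metric.tendsto_nhds.mp hPint (ε / 4) (by positivity)] with lam hlam
  have h3 : dist (∫ x, (f x : ℂ) * (g (lam * x) : ℂ)) (A : ℂ) ≤ d + (ε / 4 + d) := by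
    calc dist (∫ x, (f x : ℂ) * (g (lam * x) : ℂ)) (A : ℂ)
        ≤ dist (∫ x, (f x : ℂ) * (g (lam * x) : ℂ))
            (∫ x, (f x : ℂ) * P ((lam * x : ℝ) : AddCircle T)) +
          dist (∫ x, (f x : ℂ) * P ((lam * x : ℝ) : AddCircle T)) (A : ℂ) := dist_triangle _ _ _
    _ ≤ d + (ε / 4 + d) := by
        gcongr
        · rw [dist_eq_norm]; exact hclose lam
        · calc dist (∫ x, (f x : ℂ) * P ((lam * x : ℝ) : AddCircle T)) (A : ℂ)
              ≤ dist (∫ x, (f x : ℂ) * P ((lam * x : ℝ) : AddCircle T)) (c 0) +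
                dist (c 0) (A : ℂ) := dist_triangle _ _ _
          _ ≤ ε / 4 + d :=
              add_le_add hlam.le (by rw [dist_eq_norm, ← norm_neg]; simpa using hc0)
  linarith [h3]
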